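/- Let n ≥ m ≥ 1 and d = n + 1 - ⌊(n+1)/(m+1)⌋ - ⌈(n+1)/(m+1)⌉. Then for all 0 ≤ k ≤ d, ∑_{j=0}^{k} (-1)^{k-j} · binom(d-j, k-j) · C(n-j+1, m; j) ≥ 0, where C(N, m; j) is the coefficient of x^j in (1+x+⋯+x^{m-1})^N. -/

import Mathlib

open PowerSeries Finset

noncomputable section StmtAux

abbrev RR := PowerSeries ℤ
def uu : RR := PowerSeries.mk fun _ => 1
def zz : RR := X * uu

lemma coeff_uu (k : ℕ) : coeff k uu = 1 := coeff_mk k _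

lemma one_sub_X_mul_uu : ((1 : RR) - X) * uu = 1 := by
  ext k
  rw [sub_mul, one_mul, map_sub, coeff_one]
  cases k with
  | zero => simp [uu, coeff_zero_X_mul]
  | succ k => simp [uu, coeff_succ_X_mul, coeff_mk]

lemma one_sub_X_pow_mul_uu_pow (s : ℕ) : ((1 : RR) - X)^s * uu^s = 1 := by
  rw [← mul_pow, one_sub_X_mul_uu, one_pow]

/-- exchange lemma -/
lemma exch {a b c d : ℕ} (h : a + d = b + c) :
    ((1 : RR) - X)^a * uu^b = ((1 : RR) - X)^c * uu^d := by
  have hM : (((1:RR) - X)^a * uu^b) * (((1:RR) - X)^d * uu^c) = 1 := by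
    have : (((1:RR) - X)^a * uu^b) * (((1:RR) - X)^d * uu^c)
        = (((1:RR) - X)^(a+d)) * (uu^(b+c)) := by ring
    rw [this, h, one_sub_X_pow_mul_uu_pow]
  have hM' : (((1:RR) - X)^c * uu^d) * (((1:RR) - X)^d * uu^c) = 1 := by
    have : (((1:RR) - X)^c * uu^d) * (((1:RR) - X)^d * uu^c)
        = (((1:RR) - X)^(c+d)) * (uu^(c+d)) := by ring
    rw [this, one_sub_X_pow_mul_uu_pow]
  calc ((1:RR) - X)^a * uu^b
      = (((1:RR) - X)^a * uu^b) * ((((1:RR) - X)^c * uu^d) * (((1:RR) - X)^d * uu^c)) := by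
        rw [hM', mul_one]
    _ = (((1:RR) - X)^c * uu^d) * ((((1:RR) - X)^a * uu^b) * (((1:RR) - X)^d * uu^c)) := by ring
    _ = ((1:RR) - X)^c * uu^d := by rw [hM, mul_one]

/-- nonneg coefficients -/
def nn (f : RR) : Prop := ∀ k, 0 ≤ coeff k f

lemma nn_one : nn 1 := by intro k; rw [coeff_one]; split <;> norm_num

lemma nn_mul {f g : RR} (hf : nn f) (hg : nn g) : nn (f * g) := by
  intro k
  rw [coeff_mul]
  exact Finset.sum_nonneg fun p _ => mul_nonneg (hf p.1) (hg p.2)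

lemma nn_pow {f : RR} (hf : nn f) (s : ℕ) : nn (f ^ s) := by
  induction s with
  | zero => simpa using nn_one
  | succ s ih => rw [pow_succ]; exact nn_mul ih hf

lemma nn_add {f g : RR} (hf : nn f) (hg : nn g) : nn (f + g) := by
  intro k; rw [map_add]; exact add_nonneg (hf k) (hg k)

lemma nn_sum {α : Type} {s : Finset α} {f : α → RR} (h : ∀ a ∈ s, nn (f a)) :
    nn (∑ a ∈ s, f a) := by
  intro k
  rw [map_sum]
  exact Finset.sum_nonneg fun a ha => h a ha k

lemma nn_zero : nn 0 := by intro k; simp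

lemma nn_uu : nn uu := by intro k; rw [coeff_uu]; norm_num

lemma nn_X : nn (X : RR) := by intro k; rw [coeff_X]; split <;> norm_num


variable (m : ℕ)


def G : ℕ → RR
  | 0 => 1
  | (q+1) => ∑ i ∈ Finset.range (min m (q+1)), zz^i * G (q - i)
  decreasing_by exact Nat.lt_succ_of_le (Nat.sub_le _ _)

def g (t : ℤ) : RR := if 0 ≤ t then G m t.toNat else 0

lemma G_zero : G m 0 = 1 := by rw [G]

lemma g_natCast (t : ℕ) : g m (t : ℤ) = G m t := by simp [g]

lemma g_neg {t : ℤ} (h : t < 0) : g m t = 0 := by simp [g, not_le.mpr h]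

lemma g_zero : g m 0 = 1 := by
  rw [show (0:ℤ) = ((0:ℕ):ℤ) from rfl, g_natCast, G_zero]

lemma G_rec {q : ℕ} (hq : 1 ≤ q) :
    G m q = ∑ i ∈ Finset.range m, zz^i * g m ((q : ℤ) - 1 - i) := by
  obtain ⟨q', rfl⟩ : ∃ q', q = q' + 1 := ⟨q - 1, by omega⟩
  rw [G]
  have h1 : ∑ i ∈ Finset.range m, zz^i * g m (((q' : ℤ) + 1) - 1 - i)
      = ∑ i ∈ Finset.range (min m (q'+1)), zz^i * g m (((q' : ℤ) + 1) - 1 - i) := by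
    apply (Finset.sum_subset (Finset.range_subset_range.mpr (min_le_left _ _)) _).symm
    intro i hi hni
    simp only [Finset.mem_range, lt_min_iff, not_and, not_lt] at hi hni
    have : ((q' : ℤ) + 1 - 1 - i) < 0 := by
      have := hni hi; omega
    rw [g_neg m this, mul_zero]
  push_cast at h1 ⊢
  rw [h1]
  apply Finset.sum_congr rfl
  intro i hi
  simp only [Finset.mem_range, lt_min_iff] at hi
  have : ((q' : ℤ) + 1 - 1 - i) = ((q' - i : ℕ) : ℤ) := by
    have : i ≤ q' := by omega
    push_cast [this]; ring
  rw [this, g_natCast]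

lemma g_rec {q : ℤ} (hq : 1 ≤ q) :
    g m q = ∑ i ∈ Finset.range m, zz^i * g m (q - 1 - i) := by
  obtain ⟨t, rfl⟩ : ∃ t : ℕ, q = (t : ℤ) := ⟨q.toNat, by omega⟩
  rw [g_natCast, G_rec m (by exact_mod_cast hq)]

lemma sum_rec_shift (s : ℤ) :
    ∑ i ∈ Finset.range m, zz^i * g m (s - 1 - i)
      = g m s - (if s = 0 then 1 else 0) := by
  rcases lt_trichotomy s 0 with h | h | h
  · rw [g_neg m h, if_neg (by omega)]
    rw [Finset.sum_eq_zero, sub_zero]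
    intro i _
    rw [g_neg m (by omega), mul_zero]
  · subst h
    rw [g_zero, if_pos rfl, sub_self]
    apply Finset.sum_eq_zero
    intro i _
    rw [g_neg m (by omega), mul_zero]
  · rw [if_neg (by omega), sub_zero, ← g_rec m (by omega)]

/-- inner double sum of the splitting identity -/
def TT (P : ℕ) (s : ℤ) : RR :=
  ∑ a ∈ Finset.range (m-1), ∑ b ∈ Finset.range (m-1-a),
    zz^(a+b+1) * (g m ((P:ℤ)-1-a) * g m (s-1-b))

lemma TT_neg {P : ℕ} {s : ℤ} (h : s ≤ 0) : TT m P s = 0 := by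
  apply Finset.sum_eq_zero
  intro a _
  apply Finset.sum_eq_zero
  intro b _
  rw [show g m (s-1-(b:ℤ)) = 0 from g_neg m (by omega), mul_zero, mul_zero]

lemma sum_range_ite_lt {M : Type*} [AddCommMonoid M] {k n : ℕ} (h : k ≤ n) (f : ℕ → M) :
    ∑ a ∈ Finset.range n, (if a < k then f a else 0) = ∑ a ∈ Finset.range k, f a := by
  rw [← Finset.sum_subset (Finset.range_subset_range.mpr h)
    (fun a _ ha => if_neg (by simp only [Finset.mem_range] at ha ⊢; omega))]
  exact Finset.sum_congr rfl fun a ha => if_pos (Finset.mem_range.mp ha)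

lemma split (P Q : ℕ) :
    g m ((P:ℤ) + Q) = g m P * g m Q + TT m P Q := by
  induction Q using Nat.strong_induction_on with
  | _ Q IH =>
  rcases Nat.eq_zero_or_pos Q with hQ | hQ
  · subst hQ
    rw [TT_neg m (by norm_num)]
    push_cast
    rw [add_zero, g_zero, mul_one, add_zero]
  -- Q ≥ 1
  have hrec : g m ((P:ℤ) + Q) = ∑ i ∈ Finset.range m, zz^i * g m ((P:ℤ) + Q - 1 - i) :=
    g_rec m (by push_cast; omega)
  have hterm : ∀ i ∈ Finset.range m,
      zz^i * g m ((P:ℤ) + Q - 1 - i)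
        = (g m (P:ℤ) * (zz^i * g m ((Q:ℤ)-1-i)) + zz^i * TT m P ((Q:ℤ)-1-i))
          + (if Q ≤ i then zz^i * g m ((P:ℤ) + Q - 1 - i) else 0) := by
    intro i _
    by_cases hc : i < Q
    · rw [if_neg (by omega), add_zero]
      obtain ⟨s, hs⟩ : ∃ s : ℕ, ((Q:ℤ) - 1 - i) = (s:ℤ) := ⟨Q - 1 - i, by push_cast; omega⟩
      have hsQ : s < Q := by omega
      have harg : (P:ℤ) + Q - 1 - i = (P:ℤ) + s := by omega
      rw [harg, hs, IH s hsQ]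
      ring
    · rw [if_pos (by omega)]
      rw [show g m ((Q:ℤ)-1-i) = 0 from g_neg m (by omega),
        TT_neg m (show (Q:ℤ)-1-(i:ℤ) ≤ 0 by omega), mul_zero, mul_zero, zero_add, zero_add]
  rw [hrec, Finset.sum_congr rfl hterm, Finset.sum_add_distrib, Finset.sum_add_distrib]
  -- piece 1 : main product term
  have h1 : ∑ i ∈ Finset.range m, g m (P:ℤ) * (zz^i * g m ((Q:ℤ)-1-i))
      = g m (P:ℤ) * g m (Q:ℤ) := by
    rw [← Finset.mul_sum, sum_rec_shift, if_neg (show ¬((Q:ℤ) = 0) by omega), sub_zero]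
  -- piece 2 : the TT sums
  have h2 : ∑ i ∈ Finset.range m, zz^i * TT m P ((Q:ℤ)-1-i)
      = TT m P (Q:ℤ)
        - ∑ a ∈ Finset.range (m-1),
            (if a < m - Q then zz^(a+Q) * g m ((P:ℤ)-1-a) else 0) := by
    have hib : ∀ i : ℕ, zz^i * TT m P ((Q:ℤ)-1-i)
        = ∑ a ∈ Finset.range (m-1), ∑ b ∈ Finset.range (m-1-a),
            zz^(a+b+1) * (g m ((P:ℤ)-1-a) * (zz^i * g m (((Q:ℤ)-1-b) - 1 - i))) := by
      intro i
      rw [TT, Finset.mul_sum]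
      refine Finset.sum_congr rfl fun a _ => ?_
      rw [Finset.mul_sum]
      refine Finset.sum_congr rfl fun b _ => ?_
      rw [show ((Q:ℤ)-1-(b:ℤ)) - 1 - (i:ℤ) = (Q:ℤ)-1-(i:ℤ)-1-(b:ℤ) by ring]
      ring
    calc ∑ i ∈ Finset.range m, zz^i * TT m P ((Q:ℤ)-1-i)
        = ∑ a ∈ Finset.range (m-1), ∑ b ∈ Finset.range (m-1-a),
            zz^(a+b+1) * (g m ((P:ℤ)-1-a)
              * (∑ i ∈ Finset.range m, zz^i * g m (((Q:ℤ)-1-b) - 1 - i))) := by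
          rw [Finset.sum_congr rfl (fun i _ => hib i), Finset.sum_comm]
          refine Finset.sum_congr rfl fun a _ => ?_
          rw [Finset.sum_comm]
          refine Finset.sum_congr rfl fun b _ => ?_
          rw [Finset.mul_sum, Finset.mul_sum]
      _ = ∑ a ∈ Finset.range (m-1), ∑ b ∈ Finset.range (m-1-a),
            (zz^(a+b+1) * (g m ((P:ℤ)-1-a) * g m ((Q:ℤ)-1-b))
              - (if b = Q-1 then zz^(a+b+1) * g m ((P:ℤ)-1-a) else 0)) := by
          refine Finset.sum_congr rfl fun a _ => Finset.sum_congr rfl fun b _ => ?_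
          rw [sum_rec_shift]
          rw [show (if ((Q:ℤ)-1-(b:ℤ)) = 0 then (1:RR) else 0)
              = (if b = Q-1 then (1:RR) else 0) from if_congr (by omega) rfl rfl]
          split
          · ring
          · ring
      _ = TT m P (Q:ℤ)
          - ∑ a ∈ Finset.range (m-1), ∑ b ∈ Finset.range (m-1-a),
              (if b = Q-1 then zz^(a+b+1) * g m ((P:ℤ)-1-a) else 0) := by
          rw [TT, ← Finset.sum_sub_distrib]
          refine Finset.sum_congr rfl fun a _ => ?_
          rw [← Finset.sum_sub_distrib]
      _ = TT m P (Q:ℤ)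
          - ∑ a ∈ Finset.range (m-1),
              (if a < m - Q then zz^(a+Q) * g m ((P:ℤ)-1-a) else 0) := by
          congr 1
          refine Finset.sum_congr rfl fun a _ => ?_
          rw [Finset.sum_ite_eq' (Finset.range (m-1-a)) (Q-1)
            (fun b => zz^(a+b+1) * g m ((P:ℤ)-1-a))]
          exact if_congr (by rw [Finset.mem_range]; omega)
            (by rw [show a + (Q-1) + 1 = a + Q by omega]) rfl
  -- piece 3 : boundary terms
  have h3 : ∑ i ∈ Finset.range m, (if Q ≤ i then zz^i * g m ((P:ℤ) + Q - 1 - i) else 0)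
      = ∑ a ∈ Finset.range (m-1),
          (if a < m - Q then zz^(a+Q) * g m ((P:ℤ)-1-a) else 0) := by
    rw [← Finset.sum_filter]
    rw [show (Finset.range m).filter (fun i => Q ≤ i) = Finset.Ico Q m from by
      ext i; simp [Finset.mem_range, Finset.mem_Ico]; omega]
    rw [Finset.sum_Ico_eq_sum_range]
    rw [sum_range_ite_lt (show m - Q ≤ m - 1 by omega)]
    refine Finset.sum_congr rfl fun a _ => ?_
    rw [show (P:ℤ) + Q - 1 - ((Q + a : ℕ):ℤ) = (P:ℤ)-1-(a:ℤ) by push_cast; ring,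
      show Q + a = a + Q by omega]
  rw [h1, h2, h3]
  ring


/-! ## The depth bound function -/

def D (q : ℕ) : ℕ := q - q/(m+1) - (q+m)/(m+1)

lemma L0 (hm : 1 ≤ m) (q : ℕ) : q/(m+1) + (q+m)/(m+1) ≤ q := by
  rcases Nat.eq_zero_or_pos q with rfl | hq
  · simp [Nat.div_eq_of_lt (show m < m + 1 by omega)]
  by_contra hcon
  push_neg at hcon
  have hA : (q/(m+1))*(m+1) ≤ q := Nat.div_mul_le_self _ _
  have hB : ((q+m)/(m+1))*(m+1) ≤ q+m := Nat.div_mul_le_self _ _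
  have h2 : (q+1)*(m+1) ≤ (q/(m+1) + (q+m)/(m+1))*(m+1) :=
    Nat.mul_le_mul_right _ (by omega)
  rw [add_mul] at h2
  nlinarith [hm, hq]

lemma D_zero : D m 0 = 0 := by simp [D]

lemma D_add (hm : 1 ≤ m) (c q : ℕ) : D m (c*(m+1) + q) = c*(m-1) + D m q := by
  have h1 : (c*(m+1)+q)/(m+1) = q/(m+1) + c := by
    rw [add_comm (c*(m+1)) q, Nat.add_mul_div_right _ _ (show 0 < m+1 by omega)]
  have h2 : (c*(m+1)+q+m)/(m+1) = (q+m)/(m+1) + c := by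
    rw [show c*(m+1)+q+m = (q+m) + c*(m+1) by ring,
      Nat.add_mul_div_right _ _ (show 0 < m+1 by omega)]
  have hc : c*(m+1) = c*(m-1) + 2*c := by
    rw [show m+1 = (m-1)+2 by omega, Nat.mul_add]; ring
  have h0 := L0 m hm q
  have hq1 : q/(m+1) ≤ q := Nat.div_le_self _ _
  unfold D
  rw [h1, h2, hc]
  omega

lemma D_small {t : ℕ} (h1 : 1 ≤ t) (h2 : t ≤ m) : D m t = t - 1 := by
  have e1 : t/(m+1) = 0 := Nat.div_eq_of_lt (by omega)
  have e2 : (t+m)/(m+1) = 1 := Nat.div_eq_of_lt_le (by omega) (by omega)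
  unfold D; omega

lemma D_le {q : ℕ} (hq : 1 ≤ q) : D m q + 1 ≤ q := by
  have hB : 1 ≤ (q+m)/(m+1) := (Nat.one_le_div_iff (by omega)).mpr (by omega)
  have hA : q/(m+1) ≤ q := Nat.div_le_self _ _
  unfold D
  generalize q/(m+1) = A at *
  generalize (q+m)/(m+1) = B at *
  omega

lemma D_ge {q : ℕ} (hq : q ≤ m) : q ≤ D m q + 1 := by
  rcases Nat.eq_zero_or_pos q with rfl | h1
  · omega
  · rw [D_small m h1 hq]; omega

/-! ## Positivity -/

lemma key_mul (aa bb cc w : ℕ) (f h : RR) (hf : nn (((1:RR)-X)^aa * f))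
    (hh : nn (((1:RR)-X)^bb * h)) (hle : cc ≤ aa + bb + w) :
    nn (((1:RR)-X)^cc * (zz^w * (f * h))) := by
  have hex : ((1:RR)-X)^cc * uu^w = ((1:RR)-X)^(aa+bb) * uu^(aa+bb+w-cc) :=
    exch (by omega)
  have heq : ((1:RR)-X)^cc * (zz^w * (f * h))
      = X^w * (uu^(aa+bb+w-cc) * ((((1:RR)-X)^aa * f) * (((1:RR)-X)^bb * h))) := by
    calc ((1:RR)-X)^cc * (zz^w * (f*h))
        = X^w * ((((1:RR)-X)^cc * uu^w) * (f*h)) := by rw [zz, mul_pow]; ring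
      _ = X^w * ((((1:RR)-X)^(aa+bb) * uu^(aa+bb+w-cc)) * (f*h)) := by rw [hex]
      _ = X^w * (uu^(aa+bb+w-cc) * ((((1:RR)-X)^aa * f) * (((1:RR)-X)^bb * h))) := by
          rw [pow_add]; ring
  rw [heq]
  exact nn_mul (nn_pow nn_X w) (nn_mul (nn_pow nn_uu _) (nn_mul hf hh))

lemma uu_eq : uu = 1 + X * uu := by
  ext k
  cases k with
  | zero => simp [uu, coeff_zero_X_mul, coeff_mk]
  | succ k => simp [uu, coeff_succ_X_mul, coeff_mk, coeff_one]

lemma geo_split (s : ℕ) : uu = (∑ i ∈ Finset.range s, (X:RR)^i) + X^s * uu := by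
  induction s with
  | zero => simp
  | succ s ih =>
    rw [Finset.sum_range_succ]
    calc uu = (∑ i ∈ Finset.range s, (X:RR)^i) + X^s * uu := ih
      _ = (∑ i ∈ Finset.range s, (X:RR)^i) + X^s * (1 + X * uu) := by rw [← uu_eq]
      _ = (∑ i ∈ Finset.range s, (X:RR)^i) + X^s + X^(s+1) * uu := by ring

lemma G_base : ∀ s, s + 1 ≤ m → G m (s+1) = uu^s := by
  intro s
  induction s using Nat.strong_induction_on with
  | _ s IH =>
  intro hsm
  rcases Nat.eq_zero_or_pos s with rfl | hs
  · rw [G]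
    simp [show min m 1 = 1 by omega, G_zero]
  obtain ⟨s', rfl⟩ : ∃ s', s = s'+1 := ⟨s-1, by omega⟩
  rw [G, show min m (s'+1+1) = s'+1+1 by omega, Finset.sum_range_succ,
    Nat.sub_self, G_zero, mul_one]
  have hterm : ∀ i ∈ Finset.range (s'+1), zz^i * G m (s'+1-i) = X^i * uu^s' := by
    intro i hi
    rw [Finset.mem_range] at hi
    rw [show s'+1-i = (s'-i)+1 by omega, IH (s'-i) (by omega) (by omega), zz, mul_pow,
      mul_assoc, ← pow_add, show i + (s'-i) = s' by omega]
  rw [Finset.sum_congr rfl hterm, ← Finset.sum_mul]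
  calc (∑ i ∈ Finset.range (s'+1), (X:RR)^i) * uu^s' + zz^(s'+1)
      = ((∑ i ∈ Finset.range (s'+1), (X:RR)^i) + X^(s'+1) * uu) * uu^s' := by
        rw [zz, mul_pow, pow_succ uu s']; ring
    _ = uu * uu^s' := by rw [← geo_split]
    _ = uu^(s'+1) := by rw [← pow_succ']

lemma G_m1 : G m (m+1) = (∑ i ∈ Finset.range m, (X:RR)^i) * uu^(m-1) := by
  rw [G, show min m (m+1) = m by omega, Finset.sum_mul]
  refine Finset.sum_congr rfl fun i hi => ?_
  rw [Finset.mem_range] at hi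
  rw [show m - i = (m-i-1)+1 by omega, G_base m (m-i-1) (by omega), zz, mul_pow,
    mul_assoc, ← pow_add, show i + (m-i-1) = m-1 by omega]

theorem Pos (hm : 1 ≤ m) : ∀ t : ℕ, nn (((1:RR)-X)^(D m t) * G m t) := by
  intro t
  induction t using Nat.strong_induction_on with
  | _ t IH =>
  rcases lt_trichotomy t (m+1) with ht | ht | ht
  · -- t ≤ m
    rcases Nat.eq_zero_or_pos t with rfl | h1
    · rw [D_zero, G_zero, pow_zero, one_mul]; exact nn_one
    · rw [show t = (t-1)+1 by omega, G_base m (t-1) (by omega),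
        D_small m (by omega) (by omega)]
      rw [show (t-1)+1-1 = t-1 by omega, one_sub_X_pow_mul_uu_pow]
      exact nn_one
  · -- t = m+1
    subst ht
    have hD : D m (m+1) = m - 1 := by
      have e1 : (m+1)/(m+1) = 1 := Nat.div_self (by omega)
      have e2 : (m+1+m)/(m+1) = 1 := Nat.div_eq_of_lt_le (by omega) (by omega)
      unfold D; omega
    rw [hD, G_m1 m]
    rw [show ((1:RR)-X)^(m-1) * ((∑ i ∈ Finset.range m, (X:RR)^i) * uu^(m-1))
        = (∑ i ∈ Finset.range m, (X:RR)^i) * (((1:RR)-X)^(m-1) * uu^(m-1)) by ring,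
      one_sub_X_pow_mul_uu_pow, mul_one]
    exact nn_sum fun i _ => nn_pow nn_X i
  · -- t ≥ m+2
    obtain ⟨c', r, hdm, hr⟩ : ∃ c r, (c+1)*(m+1) + r = t-1 ∧ r < m+1 := by
      refine ⟨(t-1)/(m+1) - 1, (t-1) % (m+1), ?_, Nat.mod_lt _ (by omega)⟩
      have h1 := Nat.div_add_mod (t-1) (m+1)
      have hc : 1 ≤ (t-1)/(m+1) := (Nat.one_le_div_iff (by omega)).mpr (by omega)
      rw [show (t-1)/(m+1) - 1 + 1 = (t-1)/(m+1) by omega, mul_comm]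
      exact h1
    set P := (c'+1)*(m+1) with hPdef
    set Q := r+1 with hQdef
    have hPlin : P = c'*(m+1) + m + 1 := by rw [hPdef]; ring
    have hPm : m+1 ≤ P := by omega
    have hPQ : t = P + Q := by omega
    have hQm : Q ≤ m+1 := by omega
    have hQ1 : 1 ≤ Q := by omega
    have hDt : D m t = (c'+1)*(m-1) + D m Q := by
      rw [hPQ, hPdef]; exact D_add m hm (c'+1) Q
    have hbr : (c'+1)*(m-1) = c'*(m-1) + (m-1) := by ring
    have hGt : G m t = G m P * G m Q + TT m P Q := by
      have := split m P Q
      rw [g_natCast, g_natCast] at this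
      rw [← this, show ((P:ℤ) + Q) = ((P + Q : ℕ) : ℤ) by push_cast; ring, g_natCast, ← hPQ]
    rw [hGt, mul_add]
    apply nn_add
    · -- main term
      have hDP : D m P = (c'+1)*(m-1) := by
        have h := D_add m hm (c'+1) 0
        rw [add_zero, D_zero, add_zero] at h
        rw [hPdef, h]
      have h := key_mul (D m P) (D m Q) (D m t) 0 (G m P) (G m Q)
        (IH P (by omega)) (IH Q (by omega)) (by omega)
      rw [pow_zero, one_mul] at h
      exact h
    · -- TT terms
      rw [TT, Finset.mul_sum]
      apply nn_sum
      intro a ha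
      rw [Finset.mul_sum]
      apply nn_sum
      intro b hb
      rw [Finset.mem_range] at ha hb
      have hPa : ((P:ℤ)-1-a) = ((P-1-a : ℕ) : ℤ) := by omega
      rcases le_or_gt Q b with hQb | hQb
      · -- g (Q-1-b) = 0
        rw [show g m ((Q:ℤ)-1-b) = 0 from g_neg m (by omega), mul_zero, mul_zero, mul_zero]
        exact nn_zero
      · have hQb' : ((Q:ℤ)-1-b) = ((Q-1-b : ℕ) : ℤ) := by omega
        rw [hPa, hQb', g_natCast, g_natCast]
        apply key_mul (D m (P-1-a)) (D m (Q-1-b)) (D m t) (a+b+1) _ _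
          (IH (P-1-a) (by omega)) (IH (Q-1-b) (by omega))
        -- arithmetic inequality
        have hDQ : D m Q + 1 ≤ Q := D_le m hQ1
        have hDPa : D m (P-1-a) = c'*(m-1) + D m (m-a) := by
          rw [show P-1-a = c'*(m+1) + (m-a) by omega]
          exact D_add m hm c' (m-a)
        have hDma : D m (m-a) = (m-a) - 1 := D_small m (by omega) (by omega)
        have hDQb : Q-1-b ≤ D m (Q-1-b) + 1 := D_ge m (by omega)
        omega

/-! ## Connection with Euler coefficients -/

def emP : Polynomial ℤ := ∑ i ∈ Finset.range m, Polynomial.X ^ i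

def A (N j : ℕ) : ℤ := (emP m ^ N).coeff j

lemma coeff_emP (i : ℕ) : (emP m).coeff i = if i < m then 1 else 0 := by
  rw [emP, Polynomial.finset_sum_coeff]
  have h : ∀ i' ∈ Finset.range m, (Polynomial.X ^ i' : Polynomial ℤ).coeff i
      = if i' = i then 1 else 0 := fun i' _ => by
    rw [Polynomial.coeff_X_pow]; exact if_congr eq_comm rfl rfl
  rw [Finset.sum_congr rfl h, Finset.sum_ite_eq' (Finset.range m) i (fun _ => (1:ℤ))]
  simp [Finset.mem_range]

lemma sum_range_ite_lt' {M : Type*} [AddCommMonoid M] (k n : ℕ) (f : ℕ → M) :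
    ∑ a ∈ Finset.range n, (if a < k then f a else 0) = ∑ a ∈ Finset.range (min k n), f a := by
  rcases le_total k n with h | h
  · rw [min_eq_left h]; exact sum_range_ite_lt h f
  · rw [min_eq_right h]
    exact Finset.sum_congr rfl fun a ha => if_pos (by rw [Finset.mem_range] at ha; omega)

lemma LemA (N j : ℕ) :
    A m (N+1) j = ∑ i ∈ Finset.range m, (if i ≤ j then A m N (j-i) else 0) := by
  rw [A, pow_succ', Polynomial.coeff_mul, Finset.Nat.sum_antidiagonal_eq_sum_range_succ_mk]
  have h1 : ∀ i ∈ Finset.range (j+1), (emP m).coeff i * (emP m ^ N).coeff (j-i)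
      = if i < m then A m N (j-i) else 0 := by
    intro i _
    rw [coeff_emP, A]
    split <;> simp
  calc ∑ i ∈ Finset.range (j+1), (emP m).coeff i * (emP m ^ N).coeff (j-i)
      = ∑ i ∈ Finset.range (min m (j+1)), A m N (j-i) := by
        rw [Finset.sum_congr rfl h1, sum_range_ite_lt']
    _ = ∑ i ∈ Finset.range (min (j+1) m), A m N (j-i) := by rw [min_comm]
    _ = ∑ i ∈ Finset.range m, (if i < j+1 then A m N (j-i) else 0) :=
        (sum_range_ite_lt' (j+1) m _).symm
    _ = ∑ i ∈ Finset.range m, (if i ≤ j then A m N (j-i) else 0) :=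
        Finset.sum_congr rfl fun i _ => if_congr (by omega) rfl rfl

lemma A_zero_pos {j : ℕ} (hj : 1 ≤ j) : A m 0 j = 0 := by
  rw [A, pow_zero, Polynomial.coeff_one, if_neg (by omega)]

lemma Gq_eq (q : ℕ) : G m q
    = ∑ j ∈ Finset.range (q+1), PowerSeries.C (A m (q-j) j) * (X^j * uu^j) := by
  induction q using Nat.strong_induction_on with
  | _ q IH =>
  rcases Nat.eq_zero_or_pos q with rfl | hq
  · rw [G_zero]
    simp [A, emP]
  obtain ⟨q, rfl⟩ : ∃ q', q = q' + 1 := ⟨q - 1, by omega⟩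
  rw [G_rec m (by omega)]
  have hL : ∀ i ∈ Finset.range m, zz^i * g m (((q+1 : ℕ) : ℤ) - 1 - i)
      = ∑ j' ∈ Finset.range (q+1-i),
          PowerSeries.C (A m (q-i-j') j') * (X^(i+j') * uu^(i+j')) := by
    intro i _
    rcases le_or_gt i q with hiq | hiq
    · rw [show ((q+1 : ℕ) : ℤ) - 1 - i = ((q - i : ℕ) : ℤ) by omega, g_natCast,
        IH (q-i) (by omega), Finset.mul_sum, show q+1-i = (q-i)+1 by omega]
      refine Finset.sum_congr rfl fun j' _ => ?_
      rw [show q-i-j' = q-i-j' from rfl, zz, mul_pow, pow_add, pow_add]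
      ring
    · rw [g_neg m (by omega), mul_zero, show q+1-i = 0 by omega, Finset.range_zero,
        Finset.sum_empty]
  rw [Finset.sum_congr rfl hL]
  -- now transform the RHS to the same shape
  rw [Finset.sum_range_succ, Nat.sub_self, A_zero_pos m (Nat.le_add_left 1 q), map_zero,
    zero_mul, add_zero]
  have hR : ∀ j ∈ Finset.range (q+1),
      PowerSeries.C (A m (q+1-j) j) * (X^j * uu^j)
        = ∑ i ∈ Finset.range m,
            (if i ≤ j then PowerSeries.C (A m (q-j) (j-i)) * (X^j * uu^j) else 0) := by
    intro j hj
    rw [Finset.mem_range] at hj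
    rw [show q+1-j = (q-j)+1 by omega, LemA, map_sum, Finset.sum_mul]
    refine Finset.sum_congr rfl fun i _ => ?_
    split
    · rfl
    · rw [map_zero, zero_mul]
  rw [Finset.sum_congr rfl hR, Finset.sum_comm]
  refine Finset.sum_congr rfl fun i _ => ?_
  rw [← Finset.sum_filter]
  rw [show (Finset.range (q+1)).filter (fun j => i ≤ j) = Finset.Ico i (q+1) from by
    ext j; simp [Finset.mem_range, Finset.mem_Ico]; omega]
  rw [Finset.sum_Ico_eq_sum_range]
  refine Finset.sum_congr rfl fun j' _ => ?_
  rw [show i+j'-i = j' by omega, show q-(i+j') = q-i-j' by omega]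

/-! ## Coefficient extraction -/

lemma coeff_one_sub_X_pow (e t : ℕ) :
    coeff t (((1:RR) - X)^e) = (-1:ℤ)^t * (e.choose t) := by
  induction e generalizing t with
  | zero =>
    rw [pow_zero, coeff_one]
    cases t <;> simp
  | succ e IH =>
    rw [show ((1:RR) - X)^(e+1) = ((1:RR)-X)^e - X * ((1:RR)-X)^e by ring, map_sub]
    cases t with
    | zero => simp [IH, coeff_zero_X_mul]
    | succ t =>
      rw [coeff_succ_X_mul, IH, IH, Nat.choose_succ_succ]
      push_cast
      ring

lemma coeff_X_pow_mul_ite (w : RR) (j k : ℕ) :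
    coeff k (X^j * w) = if j ≤ k then coeff (k-j) w else 0 := by
  rcases le_or_gt j k with h | h
  · have h2 := PowerSeries.coeff_X_pow_mul w j (k-j)
    rw [show k-j+j = k by omega] at h2
    rw [h2, if_pos h]
  · rw [if_neg (by omega), coeff_mul]
    apply Finset.sum_eq_zero
    rintro ⟨x, y⟩ hxy
    rw [Finset.HasAntidiagonal.mem_antidiagonal] at hxy
    rw [coeff_X_pow, if_neg (by omega), zero_mul]

lemma coeff_main (n d k : ℕ) (hk : k ≤ d) (hd : d ≤ n+1) :
    coeff k (((1:RR)-X)^d * G m (n+1))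
      = ∑ j ∈ Finset.range (k+1),
          (-1:ℤ)^(k-j) * ((d-j).choose (k-j) : ℤ) * A m (n+1-j) j := by
  rw [Gq_eq m (n+1), Finset.mul_sum, map_sum]
  have hterm : ∀ j ∈ Finset.range (n+2),
      coeff k (((1:RR)-X)^d * (PowerSeries.C (A m (n+1-j) j) * (X^j * uu^j)))
        = if j < k+1 then (-1:ℤ)^(k-j) * ((d-j).choose (k-j) : ℤ) * A m (n+1-j) j else 0 := by
    intro j _
    rw [show ((1:RR)-X)^d * (PowerSeries.C (A m (n+1-j) j) * (X^j * uu^j))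
        = PowerSeries.C (A m (n+1-j) j) * (X^j * (((1:RR)-X)^d * uu^j)) by ring,
      PowerSeries.coeff_C_mul, coeff_X_pow_mul_ite]
    rcases le_or_gt j k with h | h
    · rw [if_pos h, if_pos (by omega)]
      rw [show ((1:RR)-X)^d * uu^j = ((1:RR)-X)^(d-j) * uu^0 from exch (by omega),
        pow_zero, mul_one, coeff_one_sub_X_pow]
      ring
    · rw [if_neg (by omega), if_neg (by omega), mul_zero]
  rw [Finset.sum_congr rfl hterm, sum_range_ite_lt' (k+1) (n+2), min_eq_left (by omega)]

end StmtAux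

/-- Coefficient of `x^j` in `(1 + x + ⋯ + x^(m-1))^N`, zero if `N < 0` or `j < 0`. -/
noncomputable def eulerCoeff (N : ℤ) (m : ℕ) (j : ℤ) : ℤ :=
  if 0 ≤ N ∧ 0 ≤ j then
    (((∑ i ∈ Finset.range m, (Polynomial.X : Polynomial ℤ) ^ i)) ^ N.toNat).coeff j.toNat
  else 0

theorem stmt5 (n m d k : ℕ) (hm : 1 ≤ m) (hmn : m ≤ n)
    (hd : d = n + 1 - (n + 1) / (m + 1) - (n + 1 + m) / (m + 1)) (hk : k ≤ d) :
    0 ≤ ∑ j ∈ Finset.range (k + 1),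
        (-1 : ℤ) ^ (k - j) * ((d - j).choose (k - j) : ℤ) * eulerCoeff ((n : ℤ) - j + 1) m j := by
  have hd' : d = D m (n+1) := by rw [hd]; rfl
  have hdn1 : d ≤ n + 1 := by
    rw [hd]; exact le_trans (Nat.sub_le _ _) (Nat.sub_le _ _)
  have heuler : ∀ j ∈ Finset.range (k+1),
      (-1 : ℤ) ^ (k - j) * ((d - j).choose (k - j) : ℤ) * eulerCoeff ((n : ℤ) - j + 1) m j
        = (-1 : ℤ) ^ (k - j) * ((d - j).choose (k - j) : ℤ) * A m (n+1-j) j := by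
    intro j hj
    rw [Finset.mem_range] at hj
    have hj' : j ≤ n + 1 := by omega
    congr 1
    unfold eulerCoeff
    rw [if_pos ⟨by omega, by omega⟩,
      show ((n : ℤ) - j + 1).toNat = n + 1 - j by omega, Int.toNat_natCast]
    rfl
  rw [Finset.sum_congr rfl heuler, ← coeff_main m n d k hk hdn1, hd']
  exact Pos m hm (n+1) k
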